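/- Let X ∈ ℝ^{n×n} with XXᵀ invertible and suppose y = Xw₀ for some w₀ ≠ 0. For ε > 0, consider the problem (P_ε): minimize ½‖w‖₂² over w ∈ ℝⁿ subject to ½‖Xw − y‖₂² ≤ ε, with dual function q_ε(λ) = inf_{w∈ℝⁿ} [½‖w‖₂² + λ·(½‖Xw − y‖₂² − ε)] for λ ≥ 0. Then for every ε > 0: (P_ε) attains its minimum, strong duality holds (the optimal value of (P_ε) equals sup_{λ≥0} q_ε(λ)), and the dual supremum is attained. Moreover, any selection of dual maximizers diverges as ε → 0⁺: for every M > 0 there exists ε₀ > 0 such that for all 0 < ε ≤ ε₀, every maximizer λ* of q_ε satisfies λ* ≥ M. -/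

import Mathlib

open Matrix

namespace RelaxedAux

variable {n : ℕ}

lemma dot_self_nonneg (v : Fin n → ℝ) : 0 ≤ v ⬝ᵥ v :=
  Finset.sum_nonneg fun i _ => mul_self_nonneg _

lemma dot_cs (u v : Fin n → ℝ) : (u ⬝ᵥ v) ^ 2 ≤ (u ⬝ᵥ u) * (v ⬝ᵥ v) := by
  simpa [dotProduct, sq, mul_pow] using
    Finset.sum_mul_sq_le_sq_mul_sq Finset.univ u v

lemma dot_expand (u d : Fin n → ℝ) (t : ℝ) :
    (u + t • d) ⬝ᵥ (u + t • d) = u ⬝ᵥ u + 2 * t * (u ⬝ᵥ d) + t ^ 2 * (d ⬝ᵥ d) := by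
  simp [add_dotProduct, dotProduct_add, smul_dotProduct,
    dotProduct_smul, dotProduct_comm d u, smul_eq_mul]
  ring

lemma dot_expand' (u d : Fin n → ℝ) :
    (u + d) ⬝ᵥ (u + d) = u ⬝ᵥ u + 2 * (u ⬝ᵥ d) + d ⬝ᵥ d := by
  simpa using dot_expand u d 1

end RelaxedAux

namespace RelaxedAux

lemma frobenius_bound (A : Matrix (Fin n) (Fin n) ℝ) (v : Fin n → ℝ) :
    (A.mulVec v) ⬝ᵥ (A.mulVec v) ≤ (∑ i, ∑ j, A i j ^ 2) * (v ⬝ᵥ v) := by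
  have h1 : (A.mulVec v) ⬝ᵥ (A.mulVec v) = ∑ i, (∑ j, A i j * v j) ^ 2 := by
    simp [dotProduct, Matrix.mulVec, sq]
  have h2 : v ⬝ᵥ v = ∑ j, v j ^ 2 := by simp [dotProduct, sq]
  rw [h1, h2, Finset.sum_mul]
  apply Finset.sum_le_sum
  intro i _
  exact Finset.sum_mul_sq_le_sq_mul_sq Finset.univ _ _

lemma sq_convex (u v : Fin n → ℝ) (t : ℝ) (h0 : 0 ≤ t) (h1 : t ≤ 1) :
    (u + t • (v - u)) ⬝ᵥ (u + t • (v - u)) ≤ (1 - t) * (u ⬝ᵥ u) + t * (v ⬝ᵥ v) := by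
  have e1 := dot_expand u (v - u) t
  have e2 := dot_expand' u (v - u)
  have e3 : u + (v - u) = v := by abel
  rw [e3] at e2
  rw [e1, e2]
  nlinarith [dot_self_nonneg (v - u),
    mul_nonneg (mul_nonneg h0 (by linarith : (0:ℝ) ≤ 1 - t)) (dot_self_nonneg (v - u))]

lemma ball_opt (r2 : ℝ) (hr2 : 0 < r2) (h u0 : Fin n → ℝ)
    (hu0 : u0 ⬝ᵥ u0 = r2)
    (hVI : ∀ u : Fin n → ℝ, u ⬝ᵥ u ≤ r2 → 0 ≤ h ⬝ᵥ (u - u0)) :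
    ∃ μ ≥ (0:ℝ), h + μ • u0 = 0 := by
  have ha : h ⬝ᵥ u0 ≤ 0 := by
    have := hVI 0 (by simpa using le_of_lt hr2)
    simpa [dotProduct_sub] using this
  by_cases hH : h ⬝ᵥ h = 0
  · refine ⟨0, le_refl _, ?_⟩
    have : h = 0 := dotProduct_self_eq_zero.mp hH
    simp [this]
  · have hHpos : 0 < h ⬝ᵥ h := lt_of_le_of_ne (dot_self_nonneg h) (Ne.symm hH)
    set H := h ⬝ᵥ h with hHdef
    set s : ℝ := Real.sqrt (r2 / H) with hs
    have hspos : 0 < s := Real.sqrt_pos.mpr (div_pos hr2 hHpos)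
    have hs2 : s ^ 2 = r2 / H := Real.sq_sqrt (le_of_lt (div_pos hr2 hHpos))
    have hs2H : s ^ 2 * H = r2 := by rw [hs2]; field_simp
    -- plug u = (-s) • h
    have hfeas : ((-s) • h) ⬝ᵥ ((-s) • h) ≤ r2 := by
      rw [smul_dotProduct, dotProduct_smul, smul_eq_mul, smul_eq_mul]
      nlinarith
    have hkey := hVI ((-s) • h) hfeas
    have hkey' : 0 ≤ -s * H - h ⬝ᵥ u0 := by
      have : h ⬝ᵥ ((-s) • h - u0) = -s * H - h ⬝ᵥ u0 := by
        rw [dotProduct_sub, dotProduct_smul, smul_eq_mul]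
      rw [this] at hkey; exact hkey
    have hcs := dot_cs h u0
    rw [hu0] at hcs
    -- a := h ⬝ᵥ u0 satisfies a ≤ -sH and a² ≤ H r2 = (sH)², so a = -sH
    have haeq : h ⬝ᵥ u0 = -(s * H) := by
      nlinarith [hcs, hs2H, hkey', mul_pos hspos hHpos, sq_nonneg (h ⬝ᵥ u0 + s * H)]
    -- then u0 + s • h = 0
    have hz : (u0 + s • h) ⬝ᵥ (u0 + s • h) = 0 := by
      have := dot_expand u0 h s
      rw [this, hu0, dotProduct_comm u0 h, haeq]
      ring_nf
      nlinarith [hs2H]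
    have hzero : u0 + s • h = 0 := dotProduct_self_eq_zero.mp hz
    refine ⟨1 / s, by positivity, ?_⟩
    have : h + (1 / s) • u0 = (1 / s) • (u0 + s • h) := by
      rw [smul_add, smul_smul]
      field_simp
      rw [one_smul]; abel
    rw [this, hzero, smul_zero]

end RelaxedAux

namespace RelaxedAux

lemma vi_of_min {S : Set (Fin n → ℝ)}
    (hconv : ∀ a ∈ S, ∀ b ∈ S, ∀ t : ℝ, 0 ≤ t → t ≤ 1 → a + t • (b - a) ∈ S)
    {w : Fin n → ℝ} (hw : w ∈ S) (hmin : ∀ w' ∈ S, w ⬝ᵥ w ≤ w' ⬝ᵥ w')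
    {w' : Fin n → ℝ} (hw' : w' ∈ S) : 0 ≤ w ⬝ᵥ (w' - w) := by
  set d := w' - w with hd
  set a := w ⬝ᵥ d with ha
  set D := d ⬝ᵥ d with hDdef
  have hD : 0 ≤ D := dot_self_nonneg d
  have key : ∀ t : ℝ, 0 < t → t ≤ 1 → -(t * D) / 2 ≤ a := by
    intro t ht0 ht1
    have hmem := hconv w hw w' hw' t (le_of_lt ht0) ht1
    have hle := hmin _ hmem
    rw [dot_expand w d t] at hle
    nlinarith
  by_contra hneg
  push_neg at hneg
  by_cases hD0 : D = 0
  · have := key 1 one_pos le_rfl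
    rw [hD0] at this
    simp at this
    linarith
  · have hDpos : 0 < D := lt_of_le_of_ne hD (Ne.symm hD0)
    have ht : 0 < min 1 (-a / D) := lt_min one_pos (div_pos (by linarith) hDpos)
    have hk := key _ ht (min_le_left _ _)
    have h2 : min 1 (-a / D) ≤ -a / D := min_le_right _ _
    have h3 : min 1 (-a / D) * D ≤ -a := (le_div_iff₀ hDpos).mp h2
    linarith

lemma exists_min (S : Set (Fin n → ℝ)) (hSc : IsClosed S) (w1 : Fin n → ℝ) (hw1 : w1 ∈ S) :
    ∃ w ∈ S, ∀ w' ∈ S, w ⬝ᵥ w ≤ w' ⬝ᵥ w' := by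
  have hcont : Continuous fun w : Fin n → ℝ => w ⬝ᵥ w := by
    unfold dotProduct
    fun_prop
  set K := S ∩ {w | w ⬝ᵥ w ≤ w1 ⬝ᵥ w1} with hK
  have hKc : IsClosed K := hSc.inter (isClosed_le hcont continuous_const)
  have hKsub : K ⊆ Metric.closedBall 0 (Real.sqrt (w1 ⬝ᵥ w1)) := by
    rintro w ⟨-, hw⟩
    rw [Metric.mem_closedBall, dist_zero_right]
    rw [pi_norm_le_iff_of_nonneg (Real.sqrt_nonneg _)]
    intro i
    rw [Real.norm_eq_abs]
    apply Real.abs_le_sqrt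
    have h1 : w ⬝ᵥ w = ∑ j, w j ^ 2 := by simp [dotProduct, sq]
    have h2 : w i ^ 2 ≤ w ⬝ᵥ w := by
      rw [h1]
      exact Finset.single_le_sum (fun j _ => sq_nonneg (w j)) (Finset.mem_univ i)
    exact le_trans h2 hw
  have hKcpt : IsCompact K := (isCompact_closedBall _ _).of_isClosed_subset hKc hKsub
  have hw1K : w1 ∈ K := ⟨hw1, by simp [Set.mem_setOf_eq]⟩
  have hKne : K.Nonempty := ⟨w1, hw1K⟩
  obtain ⟨w, hwK, hwmin⟩ := hKcpt.exists_isMinOn hKne hcont.continuousOn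
  refine ⟨w, hwK.1, fun w' hw' => ?_⟩
  by_cases h : w' ⬝ᵥ w' ≤ w1 ⬝ᵥ w1
  · exact (isMinOn_iff.mp hwmin) _ ⟨hw', h⟩
  · push_neg at h
    exact le_trans ((isMinOn_iff.mp hwmin) _ hw1K) (le_of_lt h)

end RelaxedAux


open RelaxedAux

set_option maxHeartbeats 2000000

/-- for the inequality relaxation of the minimum-norm interpolation problem,
the primal is attained, strong duality holds with dual attainment for every `ε > 0`, and
every dual maximizer diverges as `ε → 0⁺`. -/
theorem relaxed_min_norm_dual_divergence
    (n : ℕ) (X : Matrix (Fin n) (Fin n) ℝ) (w₀ : Fin n → ℝ)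
    (hX : IsUnit (X * Xᵀ)) (hw₀ : w₀ ≠ 0)
    (y : Fin n → ℝ) (hy : y = X.mulVec w₀)
    (obj : (Fin n → ℝ) → ℝ) (hobj : ∀ w, obj w = (1 / 2) * ∑ i, w i ^ 2)
    (con : (Fin n → ℝ) → ℝ) (hcon : ∀ w, con w = (1 / 2) * ∑ i, (X.mulVec w i - y i) ^ 2)
    (q : ℝ → ℝ → ℝ)
    (hq : ∀ ε lam, q ε lam = sInf (Set.range fun w => obj w + lam * (con w - ε)))
    (pval : ℝ → ℝ)
    (hp : ∀ ε, pval ε = sInf (obj '' {w | con w ≤ ε})) :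
    (∀ ε > (0 : ℝ),
      -- the primal minimum is attained
      (∃ w, con w ≤ ε ∧ ∀ w', con w' ≤ ε → obj w ≤ obj w') ∧
      -- strong duality: the primal value is the supremum of the dual function over λ ≥ 0
      IsLUB {d : ℝ | ∃ lam ≥ (0 : ℝ), d = q ε lam} (pval ε) ∧
      -- the dual supremum is attained
      (∃ lam ≥ (0 : ℝ), (∀ lam' ≥ (0 : ℝ), q ε lam' ≤ q ε lam) ∧ q ε lam = pval ε)) ∧
    -- every selection of dual maximizers diverges as ε → 0⁺
    (∀ M > (0 : ℝ), ∃ ε₀ > (0 : ℝ), ∀ ε : ℝ, 0 < ε → ε ≤ ε₀ →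
      ∀ lam ≥ (0 : ℝ), (∀ lam' ≥ (0 : ℝ), q ε lam' ≤ q ε lam) → M ≤ lam) := by
  classical
  -- X is invertible
  have hdet : IsUnit X.det := by
    have h1 := (Matrix.isUnit_iff_isUnit_det _).mp hX
    rw [Matrix.det_mul, Matrix.det_transpose] at h1
    rcases isUnit_iff_ne_zero.mp h1 with h2
    exact isUnit_iff_ne_zero.mpr (fun h => h2 (by rw [h]; ring))
  have hXiX : X⁻¹ * X = 1 := Matrix.nonsing_inv_mul X hdet
  have hXXi : X * X⁻¹ = 1 := Matrix.mul_nonsing_inv X hdet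
  -- dot-product forms of obj and con
  have hobjd : ∀ w, obj w = (1/2) * (w ⬝ᵥ w) := by
    intro w; rw [hobj]; simp [dotProduct, sq]
  have hcond : ∀ w, con w = (1/2) * ((X.mulVec w - y) ⬝ᵥ (X.mulVec w - y)) := by
    intro w; rw [hcon]; simp [dotProduct, sq]
  have hobjnn : ∀ w, 0 ≤ obj w := by
    intro w; rw [hobjd]; linarith [dot_self_nonneg w]
  have hconnn : ∀ w, 0 ≤ con w := by
    intro w; rw [hcond]; linarith [dot_self_nonneg (X.mulVec w - y)]
  have hconw₀ : con w₀ = 0 := by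
    rw [hcond, hy]; simp
  -- boundedness of the Lagrangian from below
  have hbdd : ∀ (ε lam : ℝ), 0 ≤ lam →
      BddBelow (Set.range fun w => obj w + lam * (con w - ε)) := by
    intro ε lam hlam
    refine ⟨-(lam * ε), ?_⟩
    rintro x ⟨w, rfl⟩
    have h1 := hobjnn w
    have h2 := hconnn w
    show -(lam * ε) ≤ obj w + lam * (con w - ε)
    nlinarith [mul_nonneg hlam h2]
  -- affine structure of the residual
  have haff : ∀ (a b : Fin n → ℝ) (t : ℝ), X.mulVec (a + t • (b - a)) - y
      = (X.mulVec a - y) + t • ((X.mulVec b - y) - (X.mulVec a - y)) := by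
    intro a b t
    rw [Matrix.mulVec_add, Matrix.mulVec_smul, Matrix.mulVec_sub]
    ext i
    simp [smul_eq_mul]
    ring
  -- convexity of the feasible set
  have hconv : ∀ ε : ℝ, ∀ a ∈ {w | con w ≤ ε}, ∀ b ∈ {w | con w ≤ ε}, ∀ t : ℝ,
      0 ≤ t → t ≤ 1 → a + t • (b - a) ∈ {w | con w ≤ ε} := by
    intro ε a ha b hb t ht0 ht1
    simp only [Set.mem_setOf_eq] at ha hb ⊢
    rw [hcond] at ha hb ⊢
    rw [haff a b t]
    have := sq_convex (X.mulVec a - y) (X.mulVec b - y) t ht0 ht1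
    nlinarith
  -- the key construction: primal minimizer and dual optimal multiplier
  have key : ∀ ε : ℝ, 0 < ε → ∃ ws lam : _,
      con ws ≤ ε ∧ (∀ w', con w' ≤ ε → obj ws ≤ obj w') ∧ 0 ≤ lam ∧
      q ε lam = obj ws ∧ pval ε = obj ws ∧ (∀ lam' ≥ (0:ℝ), q ε lam' ≤ obj ws) := by
    intro ε hε
    -- existence of the primal minimizer
    have hSclosed : IsClosed {w : Fin n → ℝ | con w ≤ ε} := by
      have hconc : Continuous con := by
        have : con = fun w => (1 / 2) * ∑ i, (X.mulVec w i - y i) ^ 2 := funext hcon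
        rw [this]
        unfold Matrix.mulVec dotProduct
        fun_prop
      exact isClosed_le hconc continuous_const
    have hw₀S : w₀ ∈ {w : Fin n → ℝ | con w ≤ ε} := by
      simp only [Set.mem_setOf_eq, hconw₀]; exact le_of_lt hε
    obtain ⟨ws, hwsS, hwsmin⟩ := exists_min _ hSclosed w₀ hw₀S
    simp only [Set.mem_setOf_eq] at hwsS
    have hobjmin : ∀ w', con w' ≤ ε → obj ws ≤ obj w' := by
      intro w' hw'
      rw [hobjd, hobjd]
      linarith [hwsmin w' hw']
    -- the multiplier
    obtain ⟨lam, hlam0, hstat, hslack⟩ :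
        ∃ lam ≥ (0:ℝ), ws + lam • (Xᵀ.mulVec (X.mulVec ws - y)) = 0 ∧
          lam * (con ws - ε) = 0 := by
      rcases lt_or_eq_of_le hwsS with hinact | hact
      · -- inactive constraint: the minimizer must be 0
        have hws0 : ws = 0 := by
          by_contra hne
          have hwspos : 0 < ws ⬝ᵥ ws :=
            lt_of_le_of_ne (dot_self_nonneg ws) (fun h => hne (dotProduct_self_eq_zero.mp h.symm))
          set u := X.mulVec ws - y with hu
          set b := u ⬝ᵥ (X.mulVec ws) with hb
          set Q := (X.mulVec ws) ⬝ᵥ (X.mulVec ws) with hQ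
          have hQnn : 0 ≤ Q := dot_self_nonneg _
          set δ := ε - con ws with hδ
          have hδpos : 0 < δ := by simp only [hδ]; linarith
          set t := min 1 (2 * δ / (2 * |b| + Q + 1)) with ht
          have hden : 0 < 2 * |b| + Q + 1 := by positivity
          have htpos : 0 < t := lt_min one_pos (by positivity)
          have ht1 : t ≤ 1 := min_le_left _ _
          have htb : t * (2 * |b| + Q + 1) ≤ 2 * δ :=
            (le_div_iff₀ hden).mp (min_le_right _ _)
          -- (1 - t) • ws is feasible
          have hres : X.mulVec ((1 - t) • ws) - y = u + (-t) • (X.mulVec ws) := by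
            rw [Matrix.mulVec_smul, hu]
            ext i
            simp [smul_eq_mul]
            ring
          have hfeas : con ((1 - t) • ws) ≤ ε := by
            rw [hcond, hres, dot_expand u (X.mulVec ws) (-t)]
            have hcws : con ws = 1/2 * (u ⬝ᵥ u) := hcond ws
            have hb1 := le_abs_self b
            have hb2 := neg_abs_le b
            nlinarith [htb, mul_le_mul_of_nonneg_left hb2 htpos.le,
              mul_nonneg (mul_nonneg htpos.le (by linarith : (0:ℝ) ≤ 1 - t)) hQnn,
              mul_nonneg htpos.le (abs_nonneg b)]
          have hobjlt : ((1 - t) • ws) ⬝ᵥ ((1 - t) • ws) < ws ⬝ᵥ ws := by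
            rw [smul_dotProduct, dotProduct_smul, smul_eq_mul, smul_eq_mul]
            nlinarith [mul_pos htpos hwspos,
              mul_nonneg (mul_nonneg htpos.le (by linarith : (0:ℝ) ≤ 1 - t)) hwspos.le]
          exact absurd (hwsmin _ hfeas) (not_le.mpr hobjlt)
        refine ⟨0, le_refl _, ?_, ?_⟩
        · rw [hws0]; simp
        · ring
      · -- active constraint
        have hu2ε : (X.mulVec ws - y) ⬝ᵥ (X.mulVec ws - y) = 2 * ε := by
          rw [hcond] at hact
          linarith
        set h := (X⁻¹)ᵀ.mulVec ws with hh
        have hXth : Xᵀ.mulVec h = ws := by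
          rw [hh, Matrix.mulVec_mulVec, ← Matrix.transpose_mul, hXiX, Matrix.transpose_one,
            Matrix.one_mulVec]
        have hVI : ∀ u : Fin n → ℝ, u ⬝ᵥ u ≤ 2 * ε → 0 ≤ h ⬝ᵥ (u - (X.mulVec ws - y)) := by
          intro u hu
          set w' := X⁻¹.mulVec (u + y) with hw'
          have hXw' : X.mulVec w' = u + y := by
            rw [hw', Matrix.mulVec_mulVec, hXXi, Matrix.one_mulVec]
          have hw'S : w' ∈ {w : Fin n → ℝ | con w ≤ ε} := by
            simp only [Set.mem_setOf_eq]
            rw [hcond, hXw']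
            have : u + y - y = u := by abel
            rw [this]
            linarith
          have hdiff : w' - ws = X⁻¹.mulVec (u - (X.mulVec ws - y)) := by
            have h1 : X.mulVec (w' - ws) = u - (X.mulVec ws - y) := by
              rw [Matrix.mulVec_sub, hXw']
              abel
            calc w' - ws = (X⁻¹ * X).mulVec (w' - ws) := by rw [hXiX, Matrix.one_mulVec]
            _ = X⁻¹.mulVec (X.mulVec (w' - ws)) := by rw [Matrix.mulVec_mulVec]
            _ = X⁻¹.mulVec (u - (X.mulVec ws - y)) := by rw [h1]
          have hvi := vi_of_min (hconv ε) (Set.mem_setOf_eq ▸ hwsS) hwsmin hw'S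
          rw [hdiff] at hvi
          rwa [Matrix.dotProduct_mulVec, ← Matrix.mulVec_transpose, ← hh] at hvi
        obtain ⟨μ, hμ0, hμ⟩ := ball_opt (2 * ε) (by linarith) h (X.mulVec ws - y) hu2ε hVI
        refine ⟨μ, hμ0, ?_, ?_⟩
        · have := congrArg (fun v => Xᵀ.mulVec v) hμ
          simpa [Matrix.mulVec_add, Matrix.mulVec_smul, hXth] using this
        · rw [hact]; ring
    -- the Lagrangian is minimized at ws
    have hLag : ∀ w, obj ws + lam * (con ws - ε) ≤ obj w + lam * (con w - ε) := by
      intro w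
      set d := w - ws with hd
      have hwd : w = ws + d := by rw [hd]; abel
      have hobjw : obj w = obj ws + (ws ⬝ᵥ d + (1/2) * (d ⬝ᵥ d)) := by
        rw [hobjd, hobjd, hwd, dot_expand' ws d]
        ring
      have hres : X.mulVec w - y = (X.mulVec ws - y) + X.mulVec d := by
        rw [hwd, Matrix.mulVec_add]
        abel
      have hconw : con w = con ws +
          ((X.mulVec ws - y) ⬝ᵥ (X.mulVec d) + (1/2) * ((X.mulVec d) ⬝ᵥ (X.mulVec d))) := by
        rw [hcond, hcond, hres, dot_expand' (X.mulVec ws - y) (X.mulVec d)]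
        ring
      have hcross : ws ⬝ᵥ d + lam * ((X.mulVec ws - y) ⬝ᵥ (X.mulVec d)) = 0 := by
        have h1 : (X.mulVec ws - y) ⬝ᵥ (X.mulVec d) = (Xᵀ.mulVec (X.mulVec ws - y)) ⬝ᵥ d := by
          rw [Matrix.dotProduct_mulVec, Matrix.mulVec_transpose]
        rw [h1, ← smul_eq_mul, ← smul_dotProduct, ← add_dotProduct, hstat,
          zero_dotProduct]
      rw [hobjw, hconw]
      nlinarith [dot_self_nonneg d, dot_self_nonneg (X.mulVec d),
        mul_nonneg hlam0 (dot_self_nonneg (X.mulVec d))]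
    -- the dual value at lam
    have hqlam : q ε lam = obj ws := by
      rw [hq]
      have hleast : IsLeast (Set.range fun w => obj w + lam * (con w - ε))
          (obj ws + lam * (con ws - ε)) := by
        constructor
        · exact ⟨ws, rfl⟩
        · rintro x ⟨w, rfl⟩
          exact hLag w
      rw [hleast.csInf_eq, hslack, add_zero]
    -- the primal value
    have hpv : pval ε = obj ws := by
      rw [hp]
      have hleast : IsLeast (obj '' {w | con w ≤ ε}) (obj ws) := by
        constructor
        · exact ⟨ws, hwsS, rfl⟩
        · rintro x ⟨w, hw, rfl⟩
          exact hobjmin w hw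
      exact hleast.csInf_eq
    -- weak duality
    have hweak : ∀ lam' ≥ (0:ℝ), q ε lam' ≤ obj ws := by
      intro lam' hlam'
      rw [hq]
      have h1 : q ε lam' ≤ obj ws + lam' * (con ws - ε) := by
        rw [hq]
        exact csInf_le (hbdd ε lam' hlam') ⟨ws, rfl⟩
      have h2 : lam' * (con ws - ε) ≤ 0 :=
        mul_nonpos_of_nonneg_of_nonpos hlam' (by linarith)
      rw [hq] at h1
      linarith
    exact ⟨ws, lam, hwsS, hobjmin, hlam0, hqlam, hpv, hweak⟩
  constructor
  · -- part 1
    intro ε hε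
    obtain ⟨ws, lam, hwsS, hobjmin, hlam0, hqlam, hpv, hweak⟩ := key ε hε
    refine ⟨⟨ws, hwsS, hobjmin⟩, ?_, ?_⟩
    · constructor
      · rintro dval ⟨lam', hlam', rfl⟩
        rw [hpv]
        exact hweak lam' hlam'
      · intro b hb
        exact hb ⟨lam, hlam0, by rw [hqlam, hpv]⟩
    · exact ⟨lam, hlam0, fun lam' h => by rw [hqlam]; exact hweak lam' h, by rw [hqlam, hpv]⟩
  · -- part 2 : divergence of dual maximizers
    intro M hM
    set A := obj w₀ with hA
    have hApos : 0 < A := by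
      rw [hA, hobjd]
      have h0 : 0 < w₀ ⬝ᵥ w₀ := lt_of_le_of_ne (dot_self_nonneg w₀)
        (fun h => hw₀ (dotProduct_self_eq_zero.mp h.symm))
      linarith
    set B := (1/2) * (y ⬝ᵥ y) with hB
    have hBnn : 0 ≤ B := by rw [hB]; linarith [dot_self_nonneg y]
    have hMB : 0 < M * B + 1 := by nlinarith
    set δ := min (1/2 : ℝ) (A / (M * B + 1)) with hδ
    have hδpos : 0 < δ := lt_min (by norm_num) (div_pos hApos hMB)
    have hδhalf : δ ≤ 1/2 := min_le_left _ _
    have hδA : δ * (M * B + 1) ≤ A := (le_div_iff₀ hMB).mp (min_le_right _ _)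
    set c := A - ((1 - δ)^2 * A + M * δ^2 * B) with hc
    have hcpos : 0 < c := by
      rw [hc]
      nlinarith [mul_le_mul_of_nonneg_left hδA hδpos.le,
        mul_nonneg (mul_nonneg hδpos.le hApos.le) (by linarith : (0:ℝ) ≤ 1 - δ),
        pow_pos hδpos 2]
    obtain ⟨C, hCdef⟩ : ∃ C : ℝ, C = ∑ i, ∑ j, ((X⁻¹) i j)^2 := ⟨_, rfl⟩
    have hCnn : 0 ≤ C := by
      rw [hCdef]
      exact Finset.sum_nonneg fun i _ => Finset.sum_nonneg fun j _ => sq_nonneg _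
    have hden : (0:ℝ) < 16 * A * (C + 1) := by nlinarith
    refine ⟨c^2 / (16 * A * (C + 1)), div_pos (pow_pos hcpos 2) hden, ?_⟩
    intro ε hε hεle lam hlam hmax
    by_contra hMlam
    push_neg at hMlam
    obtain ⟨ws, lam0, hwsS, hobjmin, hlam00, hqlam0, hpv, hweak⟩ := key ε hε
    -- lower bound : obj ws ≥ A - c/2
    set d := ws - w₀ with hd
    have hXd : X.mulVec d = X.mulVec ws - y := by
      rw [hd, Matrix.mulVec_sub, hy]
    have hdd : d ⬝ᵥ d ≤ C * (2 * ε) := by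
      have h1 : d = X⁻¹.mulVec (X.mulVec d) := by
        rw [Matrix.mulVec_mulVec, hXiX, Matrix.one_mulVec]
      have h2 : (X.mulVec d) ⬝ᵥ (X.mulVec d) ≤ 2 * ε := by
        rw [hXd]
        have h3 : con ws = (1/2) * ((X.mulVec ws - y) ⬝ᵥ (X.mulVec ws - y)) := hcond ws
        linarith
      calc d ⬝ᵥ d = (X⁻¹.mulVec (X.mulVec d)) ⬝ᵥ (X⁻¹.mulVec (X.mulVec d)) := by rw [← h1]
      _ ≤ (∑ i, ∑ j, ((X⁻¹) i j)^2) * ((X.mulVec d) ⬝ᵥ (X.mulVec d)) := frobenius_bound _ _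
      _ = C * ((X.mulVec d) ⬝ᵥ (X.mulVec d)) := by rw [hCdef]
      _ ≤ C * (2 * ε) := mul_le_mul_of_nonneg_left h2 hCnn
    have hw₀d : (w₀ ⬝ᵥ d)^2 ≤ c^2/4 := by
      have h1 := dot_cs w₀ d
      have h2 : w₀ ⬝ᵥ w₀ = 2 * A := by rw [hA, hobjd]; ring
      have h3 : 4 * A * (C + 1) * ε ≤ c^2 / 4 := by
        have h4 := mul_le_mul_of_nonneg_left hεle
          (by nlinarith : (0:ℝ) ≤ 4 * A * (C + 1))
        have heq : 4 * A * (C + 1) * (c^2 / (16 * A * (C + 1))) = c^2 / 4 := by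
          field_simp
          ring
        linarith [heq ▸ h4]
      nlinarith [mul_le_mul_of_nonneg_left hdd (by linarith : (0:ℝ) ≤ 2 * A),
        mul_nonneg hApos.le hε.le, dot_self_nonneg d]
    have hlow : A - c/2 ≤ obj ws := by
      have hws : ws = w₀ + d := by rw [hd]; abel
      have h1 : obj ws = A + w₀ ⬝ᵥ d + (1/2) * (d ⬝ᵥ d) := by
        rw [hobjd, hws, dot_expand' w₀ d, hA, hobjd]
        ring
      have h2 : -(c/2) ≤ w₀ ⬝ᵥ d := by
        nlinarith [hw₀d, hcpos, sq_nonneg (w₀ ⬝ᵥ d + c/2)]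
      rw [h1]
      linarith [dot_self_nonneg d]
    -- upper bound on q ε lam via the test point (1-δ) • w₀
    have hup : q ε lam ≤ (1-δ)^2 * A + M * δ^2 * B := by
      have h1 : q ε lam ≤ obj ((1-δ) • w₀) + lam * (con ((1-δ) • w₀) - ε) := by
        rw [hq]
        exact csInf_le (hbdd ε lam hlam) ⟨_, rfl⟩
      have hov : obj ((1-δ) • w₀) = (1-δ)^2 * A := by
        rw [hobjd, smul_dotProduct, dotProduct_smul, smul_eq_mul, smul_eq_mul,
          hA, hobjd]
        ring
      have hcv : con ((1-δ) • w₀) = δ^2 * B := by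
        rw [hcond]
        have hres : X.mulVec ((1-δ) • w₀) - y = (-δ) • y := by
          rw [Matrix.mulVec_smul, ← hy]
          ext i
          simp [smul_eq_mul]
          ring
        rw [hres, smul_dotProduct, dotProduct_smul, smul_eq_mul, smul_eq_mul, hB]
        ring
      rw [hov, hcv] at h1
      have h2 : lam * (δ^2 * B - ε) ≤ M * δ^2 * B := by
        nlinarith [mul_nonneg hlam hε.le,
          mul_nonneg (mul_nonneg (by linarith : (0:ℝ) ≤ M - lam) (sq_nonneg δ)) hBnn]
      linarith
    have hfinal := hmax lam0 hlam00
    rw [hqlam0] at hfinal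
    have : A - c/2 ≤ (1-δ)^2 * A + M * δ^2 * B := by linarith
    rw [hc] at hcpos
    linarith
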